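/- arXiv:2502.08530 — 2 statements merged into one kernel-verified Lean document; each statement's English description precedes it below -/
import Mathlib

section
/- Let (C, v) ⊆ (L, v) be an extension of valued fields. Let (l_1, …, l_n) be a tuple of elements of L that is separated over C, let U = span_C(l_1, …, l_n) be its C-linear span, and let t ∈ L ∖ U. Suppose w ∈ U satisfies v(t − w) ≥ v(t − u) for every u ∈ U. Then the tuple (l_1, …, l_n, t − w) is separated over C (and in particular C-linearly independent if (l_1, …, l_n) is). -/
/-!
STATEMENT 3: Let (l_1,…,l_n) be a tuple in L separated over C, U its C-linear span,
t ∈ L \ U, and w ∈ U such that (additively) v(t - w) ≥ v(t - u) for all u ∈ U.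
Then (l_1,…,l_n, t - w) is separated over C, and it is C-linearly independent if
(l_1,…,l_n) is.

With the multiplicative valuation `v : Valuation L Γ`, the additive maximality
condition `v(t - w) ≥ v(t - u)` becomes `v (t - w) ≤ v (t - u)`.
-/

variable {L Γ : Type*} [Field L] [LinearOrderedCommGroupWithZero Γ]

instance : OrderBot Γ where
  bot := 0
  bot_le := fun _ => zero_le'

/-- The tuple `b` is separated over the subfield `C`. -/
def Valuation.IsSeparatedTuple (v : Valuation L Γ) (C : Subfield L) {n : ℕ} (b : Fin n → L) :
    Prop :=
  ∀ c : Fin n → C, v (∑ i, (c i : L) * b i) = Finset.univ.sup fun i => v (c i : L) * v (b i)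

private lemma sup_univ_castSucc' {α : Type*} [SemilatticeSup α] [OrderBot α] {n : ℕ}
    (f : Fin (n + 1) → α) :
    Finset.univ.sup f = (Finset.univ.sup fun i : Fin n => f i.castSucc) ⊔ f (Fin.last n) := by
  apply le_antisymm
  · refine Finset.sup_le fun i _ => ?_
    refine Fin.lastCases le_sup_right
      (fun j => le_sup_of_le_left (Finset.le_sup (f := fun i : Fin n => f i.castSucc) (Finset.mem_univ j))) i
  · exact sup_le (Finset.sup_le fun i _ => Finset.le_sup (Finset.mem_univ _))
      (Finset.le_sup (Finset.mem_univ _))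

theorem snoc_best_approximation_is_separated
    (v : Valuation L Γ) (C : Subfield L) {n : ℕ} (l : Fin n → L)
    (hsep : v.IsSeparatedTuple C l)
    (t : L) (ht : t ∉ Submodule.span C (Set.range l))
    (w : L) (hw : w ∈ Submodule.span C (Set.range l))
    (hbest : ∀ u ∈ Submodule.span C (Set.range l), v (t - w) ≤ v (t - u)) :
    v.IsSeparatedTuple C (Fin.snoc l (t - w)) ∧
      (LinearIndependent C l → LinearIndependent C (Fin.snoc l (t - w) : Fin (n + 1) → L)) := by
  have htw : t - w ≠ 0 := sub_ne_zero.mpr (fun h => ht (h ▸ hw))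
  have hsepsnoc : v.IsSeparatedTuple C (Fin.snoc l (t - w)) := by
    intro c
    set d : C := c (Fin.last n) with hd
    set s : L := ∑ i : Fin n, (c i.castSucc : L) * l i with hs
    have hsum : (∑ i, (c i : L) * (Fin.snoc l (t - w) : Fin (n+1) → L) i) = s + (d : L) * (t - w) := by
      rw [Fin.sum_univ_castSucc]
      simp [hs, hd]
    have hsmem : s ∈ Submodule.span C (Set.range l) := by
      refine Submodule.sum_mem _ fun i _ => ?_
      have : l i ∈ Submodule.span C (Set.range l) :=
        Submodule.subset_span (Set.mem_range_self i)
      exact Submodule.smul_mem _ (c i.castSucc) this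
    have hsupeq : (Finset.univ.sup fun i : Fin (n + 1) =>
        v (c i : L) * v ((Fin.snoc l (t - w) : Fin (n+1) → L) i)) =
        (Finset.univ.sup fun i : Fin n => v (c i.castSucc : L) * v (l i)) ⊔
          v (d : L) * v (t - w) := by
      rw [sup_univ_castSucc']
      simp [hd]
    rw [hsum, hsupeq, ← hsep fun i => c i.castSucc]
    -- goal : v (s + d * (t-w)) = v s ⊔ v d * v (t-w)
    rcases eq_or_ne d 0 with h0 | h0
    · simp [h0, hs]
    · have hdL : (d : L) ≠ 0 := fun h => h0 (Subtype.ext h)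
      have hvx : v ((d : L) * (t - w)) = v (d : L) * v (t - w) := v.map_mul _ _
      rcases eq_or_ne (v s) (v ((d : L) * (t - w))) with heq | hne
      · -- equal values: show v(s + x) = v x
        have key : v (d : L) * v (t - w) ≤ v (s + (d : L) * (t - w)) := by
          have hrw : s + (d : L) * (t - w) = (d : L) * (t - (w - (d : L)⁻¹ * s)) := by
            field_simp
            ring
          have hmem : w - (d : L)⁻¹ * s ∈ Submodule.span C (Set.range l) := by
            refine Submodule.sub_mem _ hw ?_
            exact Submodule.smul_mem _ (d⁻¹ : C) hsmem
          have := hbest _ hmem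
          calc v (d : L) * v (t - w) ≤ v (d : L) * v (t - (w - (d : L)⁻¹ * s)) := by
                exact mul_le_mul_right this _
            _ = v (s + (d : L) * (t - w)) := by rw [← v.map_mul, ← hrw]
        have hub : v (s + (d : L) * (t - w)) ≤ v (d : L) * v (t - w) := by
          have := v.map_add s ((d : L) * (t - w))
          rw [hvx, heq, hvx] at this
          simpa using this
        rw [heq, hvx, sup_idem]
        exact le_antisymm hub key
      · rw [v.map_add_of_distinct_val hne, hvx]
  refine ⟨hsepsnoc, fun hli => ?_⟩
  have hne : ∀ i : Fin (n + 1), (Fin.snoc l (t - w) : Fin (n + 1) → L) i ≠ 0 := by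
    intro i
    refine Fin.lastCases ?_ (fun j => ?_) i
    · simpa using htw
    · simpa using hli.ne_zero j
  rw [Fintype.linearIndependent_iff]
  intro g hg i
  have hv : v (∑ i, (g i : L) * (Fin.snoc l (t - w) : Fin (n+1) → L) i) = 0 := by
    have : (∑ i, (g i : L) * (Fin.snoc l (t - w) : Fin (n+1) → L) i) = 0 := by
      simpa [Subfield.smul_def] using hg
    rw [this, v.map_zero]
  rw [hsepsnoc g] at hv
  have : v (g i : L) * v ((Fin.snoc l (t - w) : Fin (n + 1) → L) i) = 0 := by
    have := (Finset.sup_eq_bot_iff _ _).mp hv i (Finset.mem_univ i)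
    exact this
  rcases mul_eq_zero.mp this with h | h
  · exact Subtype.ext (v.zero_iff.mp h)
  · exact absurd h (v.ne_zero_iff.mpr (hne i))
end

section
/- Let (C, v) ⊆ (L, v) be an extension of valued fields. Let (b_1, …, b_n) be a good separated basis over C of its C-linear span U ⊆ L, and let b ∈ L ∖ U be such that the tuple (b_1, …, b_n, b) is separated over C. Then there exists c ∈ C^× such that (b_1, …, b_n, c·b) is a good separated basis over C of the (n+1)-dimensional subspace U + C·b. -/
/-!
STATEMENT 9: Let (b_1,…,b_n) be a good separated basis over C of its C-linear
span U ⊆ L, and let b ∈ L \ U be such that (b_1,…,b_n,b) is separated over C.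
Then there exists c ∈ C^× such that (b_1,…,b_n,c·b) is a good separated basis
over C of the subspace U + C·b.

With the multiplicative valuation, "good" means: for all i, j, either
v(bᵢ) = v(bⱼ) or v(bᵢ)/v(bⱼ) is not in the value group of C, i.e.
¬∃ c ∈ C, c ≠ 0 ∧ v bᵢ = v c * v bⱼ.
-/

variable {L Γ : Type*} [Field L] [LinearOrderedCommGroupWithZero Γ]

/-- The tuple `b` is good over `C`. -/
def Valuation.IsGoodTuple (v : Valuation L Γ) (C : Subfield L) {n : ℕ} (b : Fin n → L) : Prop :=
  ∀ i j, v (b i) = v (b j) ∨ ¬ ∃ c : C, (c : L) ≠ 0 ∧ v (b i) = v (c : L) * v (b j)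

/-- The range of `Fin.snoc`. -/
lemma aux_range_snoc {α : Type*} {n : ℕ} (b : Fin n → α) (x : α) :
    Set.range (Fin.snoc b x : Fin (n + 1) → α) = insert x (Set.range b) := by
  ext y
  constructor
  · rintro ⟨i, rfl⟩
    induction i using Fin.lastCases with
    | last => simp
    | cast i => exact Or.inr ⟨i, by simp⟩
  · rintro (rfl | ⟨i, rfl⟩)
    · exact ⟨Fin.last n, Fin.snoc_last ..⟩
    · exact ⟨i.castSucc, Fin.snoc_castSucc ..⟩

/-- Symmetry of the "same coset of the value group of C" relation. -/
lemma aux_sym (v : Valuation L Γ) (C : Subfield L) {x y : L} (hx : v x ≠ 0)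
    (h : ∃ d : C, (d : L) ≠ 0 ∧ v x = v (d : L) * v y) :
    ∃ d : C, (d : L) ≠ 0 ∧ v y = v (d : L) * v x := by
  obtain ⟨d, hd, hxy⟩ := h
  have hvd : v (d : L) ≠ 0 := by simpa [v.ne_zero_iff] using hd
  refine ⟨d⁻¹, by simpa using hd, ?_⟩
  have : ((d⁻¹ : C) : L) = (d : L)⁻¹ := by push_cast; ring
  rw [this, map_inv₀, hxy]
  rw [← mul_assoc, inv_mul_cancel₀ hvd, one_mul]

/-- Separatedness is preserved by scaling the last entry by an element of C. -/
lemma aux_sep (v : Valuation L Γ) (C : Subfield L) {n : ℕ} (b : Fin n → L) (t : L)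
    (hSnoc : v.IsSeparatedTuple C (Fin.snoc b t)) (c : C) :
    v.IsSeparatedTuple C (Fin.snoc b ((c : L) * t)) := by
  intro d
  have h := hSnoc (Fin.snoc (fun i => d (Fin.castSucc i)) (d (Fin.last n) * c))
  have e1 : (∑ i, ((Fin.snoc (fun i => d (Fin.castSucc i)) (d (Fin.last n) * c) :
      Fin (n + 1) → C) i : L) * (Fin.snoc b t : Fin (n + 1) → L) i) =
      ∑ i, (d i : L) * (Fin.snoc b ((c : L) * t) : Fin (n + 1) → L) i := by
    refine Finset.sum_congr rfl fun i _ => ?_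
    induction i using Fin.lastCases with
    | last => simp only [Fin.snoc_last]; push_cast; ring
    | cast i => simp [Fin.snoc_castSucc]
  have e2 : (Finset.univ.sup fun i =>
      v ((Fin.snoc (fun i => d (Fin.castSucc i)) (d (Fin.last n) * c) :
        Fin (n + 1) → C) i : L) * v ((Fin.snoc b t : Fin (n + 1) → L) i)) =
      Finset.univ.sup fun i =>
      v (d i : L) * v ((Fin.snoc b ((c : L) * t) : Fin (n + 1) → L) i) := by
    refine Finset.sup_congr rfl fun i _ => ?_
    induction i using Fin.lastCases with
    | last => simp only [Fin.snoc_last]; push_cast; rw [map_mul, map_mul]; exact mul_assoc _ _ _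
    | cast i => simp [Fin.snoc_castSucc]
  rw [e1, e2] at h
  exact h

/-- Goodness of the extended tuple from the key property of the new last element. -/
lemma aux_good (v : Valuation L Γ) (C : Subfield L) {n : ℕ} (b : Fin n → L) (x : L)
    (hGood : v.IsGoodTuple C b) (hx : v x ≠ 0)
    (key : ∀ j, v (b j) = v x ∨ ¬ ∃ d : C, (d : L) ≠ 0 ∧ v (b j) = v (d : L) * v x) :
    v.IsGoodTuple C (Fin.snoc b x) := by
  intro j k
  induction j using Fin.lastCases with
  | last =>
    induction k using Fin.lastCases with
    | last => left; rfl
    | cast k =>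
      simp only [Fin.snoc_last, Fin.snoc_castSucc]
      rcases key k with h | h
      · left; exact h.symm
      · right
        intro hex
        exact h (aux_sym v C hx hex)
  | cast j =>
    induction k using Fin.lastCases with
    | last => simpa only [Fin.snoc_last, Fin.snoc_castSucc] using key j
    | cast k => simpa only [Fin.snoc_castSucc] using hGood j k

theorem good_separated_basis_extension
    (v : Valuation L Γ) (C : Subfield L) {n : ℕ} (b : Fin n → L)
    (hInd : LinearIndependent C b)
    (hSep : v.IsSeparatedTuple C b)
    (hGood : v.IsGoodTuple C b)
    (t : L) (ht : t ∉ Submodule.span C (Set.range b))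
    (hSnoc : v.IsSeparatedTuple C (Fin.snoc b t)) :
    ∃ c : C, (c : L) ≠ 0 ∧
      LinearIndependent C (Fin.snoc b ((c : L) * t) : Fin (n + 1) → L) ∧
      v.IsSeparatedTuple C (Fin.snoc b ((c : L) * t)) ∧
      v.IsGoodTuple C (Fin.snoc b ((c : L) * t)) ∧
      Submodule.span C (Set.range (Fin.snoc b ((c : L) * t) : Fin (n + 1) → L)) =
        Submodule.span C (Set.range b) ⊔ Submodule.span C {t} := by
  have ht0 : t ≠ 0 := fun h => ht (h ▸ Submodule.zero_mem _)
  have hvt : v t ≠ 0 := v.ne_zero_iff.mpr ht0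
  -- Choose the scalar c depending on whether v t lies in the coset of some v (b i).
  have main : ∃ c : C, (c : L) ≠ 0 ∧ v.IsGoodTuple C (Fin.snoc b ((c : L) * t)) := by
    by_cases hex : ∃ (i : Fin n) (d : C), (d : L) ≠ 0 ∧ v t = v (d : L) * v (b i)
    · obtain ⟨i, d, hd, hvtd⟩ := hex
      have hvd : v (d : L) ≠ 0 := by simpa [v.ne_zero_iff] using hd
      have hdinv : ((d⁻¹ : C) : L) = (d : L)⁻¹ := by push_cast; ring
      have hval : v (((d⁻¹ : C) : L) * t) = v (b i) := by
        rw [map_mul, hdinv, map_inv₀, hvtd, ← mul_assoc, inv_mul_cancel₀ hvd, one_mul]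
      refine ⟨d⁻¹, by simpa using hd, ?_⟩
      refine aux_good v C b _ hGood ?_ fun j => ?_
      · rw [hval]
        exact v.ne_zero_iff.mpr (hInd.ne_zero i)
      · rw [hval]
        exact hGood j i
    · refine ⟨1, by simp, ?_⟩
      have hval : v (((1 : C) : L) * t) = v t := by simp
      refine aux_good v C b _ hGood (by rw [hval]; exact hvt) fun j => ?_
      right
      rw [hval]
      intro hj
      have hvbj : v (b j) ≠ 0 := v.ne_zero_iff.mpr (hInd.ne_zero j)
      exact hex ⟨j, aux_sym v C hvbj hj⟩
  obtain ⟨c, hc, hGood'⟩ := main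
  have hct : ((c : L) * t) ∉ Submodule.span C (Set.range b) := by
    intro h
    have h2 := Submodule.smul_mem (Submodule.span C (Set.range b)) c⁻¹ h
    have : (c⁻¹ : C) • ((c : L) * t) = t := by
      show ((c⁻¹ : C) : L) * ((c : L) * t) = t
      push_cast
      field_simp
    rw [this] at h2
    exact ht h2
  refine ⟨c, hc, ?_, aux_sep v C b t hSnoc c, hGood', ?_⟩
  · exact linearIndependent_fin_snoc.mpr ⟨hInd, hct⟩
  · rw [aux_range_snoc, Submodule.span_insert, sup_comm]
    congr 1
    have : (c : L) * t = c • t := rfl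
    rw [this]
    exact Submodule.span_singleton_smul_eq (isUnit_iff_ne_zero.mpr
      (fun h => hc (by simp [h]))) t
end
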